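/- Let P be a potential graph with barrier digraph V, let {q, q'} ⊆ S ⊆ N, and suppose T_S ≠ ∅ (there exists an undirected tree subgraph of P with vertex set S). Then λ^{•q}_S − p_{qq} = λ^{•q'}_S − p_{q'q'}. -/

import Mathlib

open scoped Classical

namespace BarrierForests

variable {α : Type*} [Fintype α] [DecidableEq α]

/-- Total weight of a set of arcs. -/
def aweight (v : α → α → ℝ) (A : Finset (α × α)) : ℝ := ∑ a ∈ A, v a.1 a.2

/-- Weight `Υ^A_S` of the arcs of `A` whose tail lies in `S`. -/
def aweightOn (v : α → α → ℝ) (A : Finset (α × α)) (S : Finset α) : ℝ :=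
  ∑ a ∈ A.filter (fun a => a.1 ∈ S), v a.1 a.2

/-- The relation "there is an arc from `i` to `j` in `A`". -/
def arcRel (A : Finset (α × α)) : α → α → Prop := fun i j => (i, j) ∈ A

/-- Entering forest: every vertex has out-degree at most one, and there are no
directed cycles. -/
def IsEForest (A : Finset (α × α)) : Prop :=
  (∀ i j j', (i, j) ∈ A → (i, j') ∈ A → j = j') ∧
  ∀ i, ¬ Relation.TransGen (arcRel A) i i

/-- Roots of a (spanning) entering forest: the vertices with no outgoing arc. -/
noncomputable def rootSet (A : Finset (α × α)) : Finset α :=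
  Finset.univ.filter fun i => ∀ j, (i, j) ∉ A

/-- `𝓕^k`: spanning entering forests of the digraph with arc set `E`
having exactly `k` trees (equivalently, `k` roots). -/
def FSet (E : Finset (α × α)) (k : ℕ) : Set (Finset (α × α)) :=
  {A | A ⊆ E ∧ IsEForest A ∧ (rootSet A).card = k}

/-- The infimum (in `EReal`, so `⊤` for the empty family) of the `w`-weights of the
members of `s`. -/
noncomputable def minW {β : Type*} (s : Set β) (w : β → ℝ) : EReal :=
  sInf ((fun x => (w x : EReal)) '' s)

/-- `φ^k`: minimum weight of a spanning entering forest with `k` trees. -/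
noncomputable def phi (v : α → α → ℝ) (E : Finset (α × α)) (k : ℕ) : EReal :=
  minW (FSet E k) (aweight v)

/-- `F ∈ 𝓕̃^k`: minimal spanning entering forest with `k` trees. -/
def IsMinForest (v : α → α → ℝ) (E : Finset (α × α)) (k : ℕ) (F : Finset (α × α)) : Prop :=
  F ∈ FSet E k ∧ (aweight v F : EReal) = phi v E k

/-- Vertex set of the tree `T^F_i` of the entering forest `F` rooted at `i`:
all vertices from which `i` is reachable. -/
noncomputable def treeVerts (F : Finset (α × α)) (i : α) : Finset α :=
  Finset.univ.filter fun j => Relation.ReflTransGen (arcRel F) j i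

/-- Arc set of the tree `T^F_i`. -/
noncomputable def treeArcs (F : Finset (α × α)) (i : α) : Finset (α × α) :=
  F.filter fun a => a.1 ∈ treeVerts F i

/-- Induced subgraph (restriction) of the arc set `A` on the vertex set `S`. -/
def restrictArcs (A : Finset (α × α)) (S : Finset α) : Finset (α × α) :=
  A.filter fun a => a.1 ∈ S ∧ a.2 ∈ S

/-- `T ∈ 𝓣^{•q}_S`: `T` is an entering tree that is a subgraph of the digraph with
arc set `E`, with vertex set `S` and root `q`. -/
def IsTreeOn (E T : Finset (α × α)) (S : Finset α) (q : α) : Prop :=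
  q ∈ S ∧ T ⊆ E ∧ (∀ a ∈ T, a.1 ∈ S ∧ a.2 ∈ S) ∧
  (∀ i ∈ S, i ≠ q → ∃! j, (i, j) ∈ T) ∧
  (∀ j, (q, j) ∉ T) ∧
  ∀ i ∈ S, Relation.ReflTransGen (arcRel T) i q

/-- `λ^{•q}_S`. -/
noncomputable def lamB (v : α → α → ℝ) (E : Finset (α × α)) (S : Finset α) (q : α) : EReal :=
  minW {T | IsTreeOn E T S q} (aweight v)

/-- `λ^•_S = min_{q ∈ S} λ^{•q}_S`. -/
noncomputable def lamBul (v : α → α → ℝ) (E : Finset (α × α)) (S : Finset α) : EReal :=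
  minW {T | ∃ q ∈ S, IsTreeOn E T S q} (aweight v)

/-- `T ∈ 𝓣^{∘q}_S`: `T` has `|S| + 1` vertices, `T|_S` is an entering tree with vertex
set `S` and root `q`, and the single arc of `T` leaving `S` goes from `q` to the root
`r ∉ S` of `T`. -/
def IsCTreeOn (E T : Finset (α × α)) (S : Finset α) (q : α) : Prop :=
  ∃ r, r ∉ S ∧ ∃ T', IsTreeOn E T' S q ∧ (q, r) ∈ E ∧ T = insert (q, r) T'

/-- `λ^{∘q}_S`. -/
noncomputable def lamC (v : α → α → ℝ) (E : Finset (α × α)) (S : Finset α) (q : α) : EReal :=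
  minW {T | IsCTreeOn E T S q} (aweight v)

/-- `λ^∘_S = min_{q ∈ S} λ^{∘q}_S`. -/
noncomputable def lamCirc (v : α → α → ℝ) (E : Finset (α × α)) (S : Finset α) : EReal :=
  minW {T | ∃ q ∈ S, IsCTreeOn E T S q} (aweight v)

/-- `μ^∘_S`: minimum of `Υ^F_S` over the spanning entering forests `F ∈ 𝓕^∘_S`,
i.e. those in which every vertex of `S` has an outgoing arc. -/
noncomputable def muCirc (v : α → α → ℝ) (E : Finset (α × α)) (S : Finset α) : EReal :=
  minW {A | A ⊆ E ∧ IsEForest A ∧ ∀ i ∈ S, ∃ j, (i, j) ∈ A} fun A => aweightOn v A S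

/-- `G ∈ 𝓡^F_y`: `G` is a descendant of `F` at the root `y`, i.e. `y` is a root of
`F`, the roots of `G` are those of `F` except `y`, `G` induces `T^F_q` on the vertex
set of every tree of `F` other than `T^F_y`, and `G` induces a tree on the vertex set
of `T^F_y`. -/
def IsDescendant (E F G : Finset (α × α)) (y : α) : Prop :=
  y ∈ rootSet F ∧ rootSet G = rootSet F \ {y} ∧
  (∀ q ∈ rootSet G, restrictArcs G (treeVerts F q) = treeArcs F q) ∧
  ∃ a ∈ treeVerts F y, IsTreeOn E (restrictArcs G (treeVerts F y)) (treeVerts F y) a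

/-- A potential graph: a connected weighted undirected graph with a loop at every
vertex.  Edges are recorded as a symmetric reflexive set of ordered pairs, with a
symmetric weight function `p`. -/
structure PotGraph (α : Type*) [Fintype α] [DecidableEq α] where
  p : α → α → ℝ
  edges : Finset (α × α)
  symm_mem : ∀ i j, (i, j) ∈ edges → (j, i) ∈ edges
  loop_mem : ∀ i, (i, i) ∈ edges
  symm_w : ∀ i j, p i j = p j i
  connected : ∀ i j : α, Relation.ReflTransGen (fun a b => (a, b) ∈ edges ∧ a ≠ b) i j

/-- Arc set of the barrier digraph of the potential graph `P`: an arc `(i,j)`, `i ≠ j`,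
for each non-loop edge of `P`. -/
def barcs (P : PotGraph α) : Finset (α × α) := P.edges.filter fun a => a.1 ≠ a.2

/-- Arc weights of the barrier digraph: `v i j = p i j - p i i`. -/
def bw (P : PotGraph α) : α → α → ℝ := fun i j => P.p i j - P.p i i

/-- Weight of a set of undirected edges of `P`. -/
noncomputable def uweight (P : PotGraph α) (T : Finset (Sym2 α)) : ℝ :=
  ∑ e ∈ T, Sym2.lift ⟨P.p, P.symm_w⟩ e

/-- `T ∈ 𝓣_S`: `T` is an undirected tree that is a subgraph of `P` (loops unused)
with vertex set `S`: its edges are non-loop edges of `P` joining vertices of `S`,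
it is connected on `S`, and it has `|S| - 1` edges. -/
def IsUTreeOn (P : PotGraph α) (T : Finset (Sym2 α)) (S : Finset α) : Prop :=
  (∀ e ∈ T, ∃ i j, i ≠ j ∧ e = s(i, j) ∧ (i, j) ∈ P.edges ∧ i ∈ S ∧ j ∈ S) ∧
  (∀ i ∈ S, ∀ j ∈ S, Relation.ReflTransGen (fun a b => s(a, b) ∈ T) i j) ∧
  T.card + 1 = S.card

/-- `ν_S`: minimum weight of an undirected tree on `S` that is a subgraph of `P`. -/
noncomputable def nu (P : PotGraph α) (S : Finset α) : EReal :=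
  minW {T | IsUTreeOn P T S} (uweight P)

/-- The underlying undirected edge set of a set of arcs. -/
def undir (A : Finset (α × α)) : Finset (Sym2 α) := A.image fun a => s(a.1, a.2)

/-- `Tq` is the entering tree (with root `q`, vertex set `S`, subgraph of the barrier
digraph of `P`) corresponding to the undirected tree `T`: it is obtained from `T` by
directing all edges toward `q` and replacing the weight of each arc `(i,j)` by
`v i j = p i j - p i i`. -/
def Corresponds (P : PotGraph α) (Tq : Finset (α × α)) (T : Finset (Sym2 α))
    (S : Finset α) (q : α) : Prop :=
  IsTreeOn (barcs P) Tq S q ∧ undir Tq = T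

/-! ### Auxiliary lemmas for Statement 11 -/

lemma chain_append_single {r : α → α → Prop} :
    ∀ (l : List α) (a b : α), List.Chain r a (l ++ [b]) →
      r ((a :: l).getLast (List.cons_ne_nil _ _)) b ∧ List.Chain r a l := by
  intro l
  induction l with
  | nil =>
    intro a b h
    rw [List.nil_append, List.Chain, List.isChain_cons_cons] at h
    exact ⟨h.1, List.Chain.nil⟩
  | cons c t ih =>
    intro a b h
    rw [List.cons_append, List.Chain, List.isChain_cons_cons] at h
    obtain ⟨hac, hc⟩ := h
    obtain ⟨h1, h2⟩ := ih c b hc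
    refine ⟨?_, List.chain_cons.mpr ⟨hac, h2⟩⟩
    rwa [List.getLast_cons (List.cons_ne_nil _ _)]

lemma chain_not_mem_root {T : Finset (α × α)} {q : α}
    (hroot : ∀ j, (q, j) ∉ T) :
    ∀ (l : List α) (a : α), List.Chain (arcRel T) a (l ++ [q]) → q ∉ a :: l := by
  intro l
  induction l with
  | nil =>
    intro a h
    rw [List.nil_append, List.Chain, List.isChain_cons_cons] at h
    simp only [List.mem_cons, List.not_mem_nil, or_false]
    rintro rfl
    exact hroot _ h.1
  | cons b t ih =>
    intro a h
    rw [List.cons_append, List.Chain, List.isChain_cons_cons] at h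
    have hb := ih b h.2
    simp only [List.mem_cons] at hb ⊢
    rintro (rfl | hc)
    · exact hroot _ h.1
    · exact hb hc

lemma chain_erase {T : Finset (α × α)} {x q : α} :
    ∀ (l : List α) (a : α), List.Chain (arcRel T) a l → q ∉ l →
      List.Chain (arcRel (T.erase (x, q))) a l := by
  intro l
  induction l with
  | nil => intro a _ _; exact List.Chain.nil
  | cons b t ih =>
    intro a h hq
    rw [List.Chain, List.isChain_cons_cons] at h ⊢
    have hb : b ≠ q := fun h' => hq (h' ▸ List.mem_cons_self)
    refine ⟨?_, ih b h.2 (fun h' => hq (List.mem_cons_of_mem _ h'))⟩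
    have : (a, b) ≠ (x, q) := fun he => hb (congrArg Prod.snd he)
    exact Finset.mem_erase.mpr ⟨this, h.1⟩

/-- Reversing the arc `(x, q)` into the root `q` of an entering tree gives an
entering tree rooted at `x`. -/
lemma swap_root {E T : Finset (α × α)} {S : Finset α} {q x : α}
    (h : IsTreeOn E T S q) (hx : (x, q) ∈ T) (hqx : (q, x) ∈ E) :
    IsTreeOn E (insert (q, x) (T.erase (x, q))) S x := by
  obtain ⟨hqS, hTE, hTS, huniq, hroot, hreach⟩ := h
  have hxS : x ∈ S := (hTS _ hx).1
  have hxq : x ≠ q := fun h' => hroot x (h' ▸ hx)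
  have hereach : ∀ i, Relation.ReflTransGen (arcRel T) i q →
      Relation.ReflTransGen (arcRel (T.erase (x, q))) i x ∨
      Relation.ReflTransGen (arcRel (T.erase (x, q))) i q := by
    intro i hi
    refine Relation.ReflTransGen.head_induction_on hi ?_ ?_
    · exact Or.inr Relation.ReflTransGen.refl
    · intro a c hac _ ih
      by_cases hax : (a, c) = (x, q)
      · left
        have : a = x := congrArg Prod.fst hax
        exact this ▸ Relation.ReflTransGen.refl
      · have harc : (a, c) ∈ T.erase (x, q) := Finset.mem_erase.mpr ⟨hax, hac⟩
        rcases ih with h1 | h1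
        · exact Or.inl (Relation.ReflTransGen.head harc h1)
        · exact Or.inr (Relation.ReflTransGen.head harc h1)
  refine ⟨hxS, ?_, ?_, ?_, ?_, ?_⟩
  · intro a ha
    rcases Finset.mem_insert.mp ha with rfl | ha
    · exact hqx
    · exact hTE (Finset.mem_of_mem_erase ha)
  · intro a ha
    rcases Finset.mem_insert.mp ha with rfl | ha
    · exact ⟨hqS, hxS⟩
    · exact hTS _ (Finset.mem_of_mem_erase ha)
  · intro i hiS hix
    by_cases hiq : i = q
    · subst hiq
      refine ⟨x, Finset.mem_insert_self _ _, ?_⟩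
      intro j hj
      rcases Finset.mem_insert.mp hj with hj | hj
      · exact (congrArg Prod.snd hj)
      · exact absurd (Finset.mem_of_mem_erase hj) (hroot j)
    · obtain ⟨j, hj, hjuniq⟩ := huniq i hiS hiq
      have hne : (i, j) ≠ (x, q) := fun he => hix (congrArg Prod.fst he)
      refine ⟨j, Finset.mem_insert_of_mem (Finset.mem_erase.mpr ⟨hne, hj⟩), ?_⟩
      intro j' hj'
      rcases Finset.mem_insert.mp hj' with hj' | hj'
      · exact absurd (congrArg Prod.fst hj') hiq
      · exact hjuniq j' (Finset.mem_of_mem_erase hj')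
  · intro j hj
    rcases Finset.mem_insert.mp hj with hj | hj
    · exact hxq (congrArg Prod.fst hj)
    · have h1 : (x, j) ∈ T := Finset.mem_of_mem_erase hj
      obtain ⟨j0, _, hjuniq⟩ := huniq x hxS hxq
      have e1 : j = j0 := hjuniq j h1
      have e2 : q = j0 := hjuniq q hx
      have : (x, j) = (x, q) := by rw [e1, e2]
      exact (Finset.mem_erase.mp hj).1 this
  · intro i hiS
    have hmono : ∀ a b, Relation.ReflTransGen (arcRel (T.erase (x, q))) a b →
        Relation.ReflTransGen (arcRel (insert (q, x) (T.erase (x, q)))) a b := by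
      intro a b hab
      exact Relation.ReflTransGen.mono (fun c d hcd => Finset.mem_insert_of_mem hcd) a b hab
    rcases hereach i (hreach i hiS) with h1 | h1
    · exact hmono _ _ h1
    · exact (hmono _ _ h1).tail (Finset.mem_insert_self _ _)

lemma swap_weight (v : α → α → ℝ) {T : Finset (α × α)} {q x : α}
    (hx : (x, q) ∈ T) (hroot : ∀ j, (q, j) ∉ T) :
    aweight v (insert (q, x) (T.erase (x, q))) = aweight v T - v x q + v q x := by
  unfold aweight
  rw [Finset.sum_insert (fun hmem => hroot x (Finset.mem_of_mem_erase hmem)),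
    Finset.sum_erase_eq_sub hx]
  ring

lemma reroot_aux (P : PotGraph α) (S : Finset α) (q' : α) (hq' : q' ∈ S) :
    ∀ (n : ℕ) (T : Finset (α × α)) (q : α), IsTreeOn (barcs P) T S q →
      ∀ l : List α, List.Chain (arcRel T) q' l →
        (q' :: l).getLast (List.cons_ne_nil _ _) = q → l.length = n →
      ∃ T', IsTreeOn (barcs P) T' S q' ∧
        aweight (bw P) T' = aweight (bw P) T + (P.p q' q' - P.p q q) := by
  intro n
  induction n with
  | zero =>
    intro T q hT l _ hlast hlen
    have hl : l = [] := List.eq_nil_of_length_eq_zero hlen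
    subst hl
    simp only [List.getLast_singleton] at hlast
    subst hlast
    exact ⟨T, hT, by ring⟩
  | succ n ih =>
    intro T q hT l hchain hlast hlen
    have hlne : l ≠ [] := by intro h; subst h; simp at hlen
    have hdecomp : l = l.dropLast ++ [l.getLast hlne] := (List.dropLast_append_getLast hlne).symm
    have hlastq : l.getLast hlne = q := by
      rw [List.getLast_cons hlne] at hlast; exact hlast
    set l' : List α := l.dropLast with hl'
    have hchain' : List.Chain (arcRel T) q' (l' ++ [q]) := by
      rw [← hlastq, ← hdecomp]; exact hchain
    obtain ⟨harcxq, hchainl'⟩ := chain_append_single (r := arcRel T) l' q' q hchain'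
    set x : α := (q' :: l').getLast (List.cons_ne_nil _ _) with hxdef
    have hroot : ∀ j, (q, j) ∉ T := hT.2.2.2.2.1
    have hxq : x ≠ q := by
      rintro rfl
      exact hroot x harcxq
    have hxT : (x, q) ∈ T := harcxq
    have hqxE : (q, x) ∈ barcs P := by
      have h1 : (x, q) ∈ barcs P := hT.2.1 hxT
      simp only [barcs, Finset.mem_filter] at h1 ⊢
      exact ⟨P.symm_mem _ _ h1.1, fun h => hxq h.symm⟩
    have hT1 : IsTreeOn (barcs P) (insert (q, x) (T.erase (x, q))) S x :=
      swap_root hT hxT hqxE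
    have hnoq : q ∉ q' :: l' := chain_not_mem_root hroot l' q' hchain'
    have hchain1 : List.Chain (arcRel (insert (q, x) (T.erase (x, q)))) q' l' := by
      have h1 : List.Chain (arcRel (T.erase (x, q))) q' l' :=
        chain_erase l' q' hchainl' (fun h => hnoq (List.mem_cons_of_mem _ h))
      exact List.IsChain.imp (fun a b hab => Finset.mem_insert_of_mem hab) h1
    have hlen' : l'.length = n := by
      have := congrArg List.length hdecomp
      simp only [List.length_append, List.length_singleton, hlen] at this
      omega
    obtain ⟨T', hT', hw⟩ := ih _ x hT1 l' hchain1 rfl hlen'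
    refine ⟨T', hT', ?_⟩
    rw [hw, swap_weight (bw P) hxT hroot]
    unfold bw
    have := P.symm_w x q
    linarith

/-- Re-rooting an entering tree: any entering tree on `S` rooted at `q` can be
transformed into one rooted at `q' ∈ S`, changing the weight by
`p q' q' - p q q`. -/
lemma reroot (P : PotGraph α) (S : Finset α) {T : Finset (α × α)} {q : α} (q' : α)
    (hq' : q' ∈ S) (hT : IsTreeOn (barcs P) T S q) :
    ∃ T', IsTreeOn (barcs P) T' S q' ∧
      aweight (bw P) T' = aweight (bw P) T + (P.p q' q' - P.p q q) := by
  obtain ⟨l, hchain, hlast⟩ :=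
    List.exists_isChain_cons_of_relationReflTransGen (hT.2.2.2.2.2 q' hq')
  exact reroot_aux P S q' hq' l.length T q hT l hchain hlast rfl

/-- Assertion 4.  If `{q, q'} ⊆ S` and `𝓣_S ≠ ∅`, then
`λ^{•q}_S - p q q = λ^{•q'}_S - p q' q'` for the barrier digraph of `P`. -/
theorem statement11 (P : PotGraph α) (S : Finset α)
    (q q' : α) (hq : q ∈ S) (hq' : q' ∈ S)
    (hne : ∃ T, IsUTreeOn P T S) :
    lamB (bw P) (barcs P) S q - ((P.p q q : ℝ) : EReal) =
      lamB (bw P) (barcs P) S q' - ((P.p q' q' : ℝ) : EReal) := by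
  clear hne
  by_cases hA : {T : Finset (α × α) | IsTreeOn (barcs P) T S q} = ∅
  · have hA' : {T : Finset (α × α) | IsTreeOn (barcs P) T S q'} = ∅ := by
      rw [Set.eq_empty_iff_forall_notMem] at hA ⊢
      intro T hT
      obtain ⟨T', hT', _⟩ := reroot P S q hq hT
      exact hA T' hT'
    unfold lamB minW
    rw [hA, hA', Set.image_empty, sInf_empty, EReal.top_sub_coe, EReal.top_sub_coe]
  · have hAne : {T : Finset (α × α) | IsTreeOn (barcs P) T S q}.Nonempty :=
      Set.nonempty_iff_ne_empty.mpr hA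
    -- both minima are attained
    have key : ∀ (r : α), {T : Finset (α × α) | IsTreeOn (barcs P) T S r}.Nonempty →
        ∃ T₀, IsTreeOn (barcs P) T₀ S r ∧
          lamB (bw P) (barcs P) S r = ((aweight (bw P) T₀ : ℝ) : EReal) ∧
          ∀ T, IsTreeOn (barcs P) T S r →
            lamB (bw P) (barcs P) S r ≤ ((aweight (bw P) T : ℝ) : EReal) := by
      intro r hne
      have hfin : ((fun T => ((aweight (bw P) T : ℝ) : EReal)) ''
          {T : Finset (α × α) | IsTreeOn (barcs P) T S r}).Finite :=
        (Set.toFinite _).image _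
      have hne' : ((fun T => ((aweight (bw P) T : ℝ) : EReal)) ''
          {T : Finset (α × α) | IsTreeOn (barcs P) T S r}).Nonempty := hne.image _
      have hmem := hne'.csInf_mem hfin
      obtain ⟨T₀, hT₀, hval⟩ := hmem
      refine ⟨T₀, hT₀, ?_, ?_⟩
      · unfold lamB minW; exact hval.symm
      · intro T hT
        unfold lamB minW
        exact sInf_le ⟨T, hT, rfl⟩
    obtain ⟨T₀, hT₀, hval, hlb⟩ := key q hAne
    obtain ⟨T₁, hT₁, hw₁⟩ := reroot P S q' hq' hT₀
    have hAne' : {T : Finset (α × α) | IsTreeOn (barcs P) T S q'}.Nonempty := ⟨T₁, hT₁⟩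
    obtain ⟨T₀', hT₀', hval', hlb'⟩ := key q' hAne'
    obtain ⟨T₁', hT₁', hw₁'⟩ := reroot P S q hq hT₀'
    -- inequalities between the real minima
    have h1 : aweight (bw P) T₀' ≤ aweight (bw P) T₀ + (P.p q' q' - P.p q q) := by
      have := hlb' T₁ hT₁
      rw [hval', ← hw₁] at *
      exact_mod_cast this
    have h2 : aweight (bw P) T₀ ≤ aweight (bw P) T₀' + (P.p q q - P.p q' q') := by
      have := hlb T₁' hT₁'
      rw [hval, ← hw₁'] at *
      exact_mod_cast this
    rw [hval, hval', ← EReal.coe_sub, ← EReal.coe_sub, EReal.coe_eq_coe_iff]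
    linarith

end BarrierForests
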